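/- Let f : ℝ → ℝ be a polynomial function with f(0) = 0 and let λ = f'(0). Then for every n ∈ ℕ there exists a polynomial P_n ∈ ℝ[X] of degree at most n whose coefficient of X^n equals λ^n, such that for every y ∈ ℝ, the n-th iterated derivative of the function a ↦ exp(y · f(a)), evaluated at a = 0, equals P_n(y). In other words, H_n(y) := (d^n/da^n) exp(y·f(a))|_{a=0} is a polynomial in y with leading term (λ y)^n. -/

import Mathlib

open Polynomial

noncomputable def PnAux (f : Polynomial ℝ) : ℕ → Polynomial (Polynomial ℝ)
  | 0 => 1
  | n + 1 => derivative (PnAux f n) +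
      C (X : Polynomial ℝ) * ((derivative f).map C) * PnAux f n

lemma PnAux_map (f : Polynomial ℝ) (y : ℝ) (n : ℕ) :
    (PnAux f (n + 1)).map (evalRingHom y) =
      derivative ((PnAux f n).map (evalRingHom y)) +
        C y * derivative f * (PnAux f n).map (evalRingHom y) := by
  have hC : (evalRingHom y).comp (C : ℝ →+* Polynomial ℝ) = RingHom.id ℝ := by
    ext r; simp
  simp [PnAux, Polynomial.map_add, Polynomial.map_mul, derivative_map, map_map, hC]

lemma PnAux_eval (f : Polynomial ℝ) (n : ℕ) (y a : ℝ) :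
    iteratedDeriv n (fun a => Real.exp (y * f.eval a)) a =
      Real.exp (y * f.eval a) * ((PnAux f n).map (evalRingHom y)).eval a := by
  induction n generalizing a with
  | zero => simp [PnAux]
  | succ n ih =>
    rw [iteratedDeriv_succ]
    have hfun : iteratedDeriv n (fun a => Real.exp (y * f.eval a)) =
        fun a => Real.exp (y * f.eval a) * ((PnAux f n).map (evalRingHom y)).eval a :=
      funext fun a => ih a
    rw [hfun]
    set pol := (PnAux f n).map (evalRingHom y) with hpol
    have h3 : HasDerivAt (fun a => Real.exp (y * f.eval a))
        (Real.exp (y * f.eval a) * (y * (derivative f).eval a)) a :=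
      ((f.hasDerivAt a).const_mul y).exp
    have h4 : HasDerivAt (fun a => pol.eval a) ((derivative pol).eval a) a :=
      pol.hasDerivAt a
    have h5 : deriv (fun a => Real.exp (y * f.eval a) * pol.eval a) a = _ := (h3.mul h4).deriv
    rw [h5, PnAux_map]
    simp only [eval_add, eval_mul, eval_C]
    ring

lemma PnAux_coeff_deg (f : Polynomial ℝ) (n : ℕ) :
    ∀ i, ((PnAux f n).coeff i).natDegree ≤ n := by
  induction n with
  | zero =>
    intro i
    simp only [PnAux, coeff_one]
    split_ifs <;> simp
  | succ n ih =>
    intro i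
    rw [PnAux, coeff_add]
    refine le_trans (natDegree_add_le _ _) (max_le ?_ ?_)
    · rw [coeff_derivative]
      refine le_trans (natDegree_mul_le) ?_
      have h0 : (((i : ℕ) : Polynomial ℝ) + 1).natDegree = 0 := by
        simpa using natDegree_natCast (R := ℝ) (i + 1)
      rw [h0, add_zero]
      exact le_trans (ih (i + 1)) (Nat.le_succ n)
    · rw [mul_assoc, coeff_C_mul]
      refine le_trans (natDegree_mul_le) ?_
      have : ((((derivative f).map (C : ℝ →+* Polynomial ℝ)) * PnAux f n).coeff i).natDegree ≤ n := by
        rw [coeff_mul]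
        refine natDegree_sum_le_of_forall_le _ _ fun x hx => ?_
        refine le_trans (natDegree_mul_le) ?_
        simpa [coeff_map] using ih x.2
      exact le_trans (add_le_add natDegree_X_le this) (by omega)
    
lemma PnAux_lead (f : Polynomial ℝ) (n : ℕ) :
    ((PnAux f n).coeff 0).coeff n = ((derivative f).eval 0) ^ n := by
  induction n with
  | zero => simp [PnAux]
  | succ n ih =>
    rw [PnAux, coeff_add, coeff_add, coeff_derivative]
    have h1 : ((PnAux f n).coeff (0 + 1)).coeff (n + 1) = 0 :=
      coeff_eq_zero_of_natDegree_lt (lt_of_le_of_lt (PnAux_coeff_deg f n _) (Nat.lt_succ_self n))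
    have h2 : (C (X : Polynomial ℝ) * ((derivative f).map C) * PnAux f n).coeff 0 =
        X * (C ((derivative f).coeff 0) * (PnAux f n).coeff 0) := by
      rw [mul_assoc, coeff_C_mul, mul_coeff_zero, coeff_map]
    rw [h2, coeff_X_mul, coeff_C_mul, ih, coeff_zero_eq_eval_zero]
    simp [h1, pow_succ]
    ring

theorem Hn_is_polynomial_with_leading_term (f : Polynomial ℝ)
    (hf0 : f.eval 0 = 0) (l : ℝ) (hl : l = (Polynomial.derivative f).eval 0) :
    ∀ n : ℕ, ∃ Q : Polynomial ℝ, Q.natDegree ≤ n ∧ Q.coeff n = l ^ n ∧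
      ∀ y : ℝ, iteratedDeriv n (fun a => Real.exp (y * f.eval a)) 0 = Q.eval y := by
  intro n
  refine ⟨(PnAux f n).coeff 0, PnAux_coeff_deg f n 0, by rw [hl]; exact PnAux_lead f n, fun y => ?_⟩
  rw [PnAux_eval, hf0, mul_zero, Real.exp_zero, one_mul,
    ← coeff_zero_eq_eval_zero, coeff_map]
  simp [coe_evalRingHom]
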